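/- Let n = 2ϑ+1 be an odd integer with ϑ ≥ 3. Then the three-element vertex set {p_2, p_{ϑ+1}, p_n} is a resolving set of the convex polytope graph Δ_n; i.e., any two distinct vertices of Δ_n have different distance vectors to (p_2, p_{ϑ+1}, p_n). -/
import Mathlib


/-- Vertices of the heptagonal circular ladder: four families indexed by `ZMod n`. -/
inductive HCLVertex (n : ℕ) : Type
  | p (t : ZMod n) : HCLVertex n
  | q (t : ZMod n) : HCLVertex n
  | r (t : ZMod n) : HCLVertex n
  | s (t : ZMod n) : HCLVertex n
deriving DecidableEq

/-- Base relation giving the edges of the heptagonal circular ladder `Γ_n`: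
`p_t p_{t+1}`, `p_t q_t`, `q_t r_t`, `r_t s_t`, `s_t r_{t+1}` (indices mod `n`). -/
def gammaRel (n : ℕ) : HCLVertex n → HCLVertex n → Prop
  | .p t, .p u => u = t + 1
  | .p t, .q u => u = t
  | .q t, .r u => u = t
  | .r t, .s u => u = t
  | .s t, .r u => u = t + 1
  | _, _ => False

/-- The heptagonal circular ladder `Γ_n`. -/
def Gamma (n : ℕ) : SimpleGraph (HCLVertex n) :=
  SimpleGraph.fromRel (gammaRel n)

/-- The extra edges `r_t q_{t+1}` added to `Γ_n` to obtain `Δ_n`. -/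
def deltaRel (n : ℕ) : HCLVertex n → HCLVertex n → Prop
  | .r t, .q u => u = t + 1
  | _, _ => False

/-- The convex polytope graph `Δ_n`, obtained from `Γ_n` by adding the edges `r_t q_{t+1}`. -/
def Delta (n : ℕ) : SimpleGraph (HCLVertex n) :=
  SimpleGraph.fromRel (fun v w => gammaRel n v w ∨ deltaRel n v w)

/-- `W` is a resolving set of `G`: every pair of distinct vertices is distinguished by
its distance to some vertex of `W`. -/
def IsResolving {V : Type*} (G : SimpleGraph V) (W : Set V) : Prop :=
  ∀ u v : V, u ≠ v → ∃ w ∈ W, G.dist w u ≠ G.dist w v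

/-- Distance from a vertex `x` to an edge `e = yz`: `min (d x y) (d x z)`. -/
noncomputable def edgeDist {V : Type*} (G : SimpleGraph V) (x : V) (e : Sym2 V) : ℕ :=
  Sym2.lift ⟨fun y z => min (G.dist x y) (G.dist x z), fun y z => min_comm _ _⟩ e

/-- `W` is an edge resolving set of `G`: every pair of distinct edges is distinguished by
its distance to some vertex of `W`. -/
def IsEdgeResolving {V : Type*} (G : SimpleGraph V) (W : Set V) : Prop :=
  ∀ e ∈ G.edgeSet, ∀ f ∈ G.edgeSet, e ≠ f → ∃ w ∈ W, edgeDist G w e ≠ edgeDist G w f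

namespace HCL

/-- circular distance from 0 -/
def cval (n : ℕ) (x : ZMod n) : ℕ := min x.val (n - x.val)

/-- candidate distance from `p a` -/
def D (n : ℕ) (a : ZMod n) : HCLVertex n → ℕ
  | .p b => cval n (b - a)
  | .q b => cval n (b - a) + 1
  | .r b => min (cval n (b - a)) (cval n (b + 1 - a)) + 2
  | .s b => min (cval n (b - a)) (min (cval n (b + 1 - a)) (cval n (b + 2 - a))) + 3

variable {n : ℕ}

lemma val_add_nat [NeZero n] (x : ZMod n) (c : ℕ) (hc : c ≤ n) :
    (x + (c : ℕ) : ZMod n).val < n ∧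
      ((x + (c : ℕ) : ZMod n).val = x.val + c ∨ (x + (c : ℕ) : ZMod n).val + n = x.val + c) := by
  have hn : 0 < n := Nat.pos_of_ne_zero (NeZero.ne n)
  have h1 : (x + (c : ℕ) : ZMod n).val = (x.val + c) % n := by
    rw [ZMod.val_add, ZMod.val_natCast, Nat.add_mod_mod]
  have hx := ZMod.val_lt x
  rcases lt_or_ge (x.val + c) n with hlt | hge
  · rw [h1, Nat.mod_eq_of_lt hlt]; omega
  · have h2 : (x.val + c) % n = x.val + c - n := by
      rw [Nat.mod_eq_sub_mod hge, Nat.mod_eq_of_lt (by omega)]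
    rw [h1, h2]; omega

lemma val_sub_nat [NeZero n] (x : ZMod n) (c : ℕ) (hc : c ≤ n) :
    (x - (c : ℕ) : ZMod n).val < n ∧
      ((x - (c : ℕ) : ZMod n).val + c = x.val ∨ (x - (c : ℕ) : ZMod n).val + c = x.val + n) := by
  have key : x - (c : ℕ) = x + ((n - c : ℕ) : ZMod n) := by
    have h : ((c : ℕ) : ZMod n) + ((n - c : ℕ) : ZMod n) = 0 := by
      rw [← Nat.cast_add, show c + (n - c) = n from by omega, ZMod.natCast_self]
    linear_combination -h
  rw [key]
  have := val_add_nat x (n - c) (by omega)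
  omega

lemma cval_def (x : ZMod n) : cval n x = min x.val (n - x.val) := rfl

/-- Lipschitz facts for consecutive cvals. -/
lemma cval_one [NeZero n] (x : ZMod n) :
    cval n (x + 1) ≤ cval n x + 1 ∧ cval n x ≤ cval n (x + 1) + 1 := by
  have h := val_add_nat x 1 (by have := Nat.pos_of_ne_zero (NeZero.ne n); omega)
  rw [Nat.cast_one] at h
  have hx := ZMod.val_lt x
  rw [cval_def, cval_def]
  omega

lemma cval_two [NeZero n] (x : ZMod n) :
    cval n (x + 2) ≤ cval n (x + 1) + 1 ∧ cval n (x + 1) ≤ cval n (x + 2) + 1 := by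
  have h := cval_one (x + 1)
  rw [show x + 1 + 1 = x + 2 by ring] at h
  exact h

lemma cval_eq_zero [NeZero n] (x : ZMod n) : cval n x = 0 ↔ x = 0 := by
  have hx := ZMod.val_lt x
  rw [cval_def, ← ZMod.val_eq_zero]
  omega

/-- Lipschitz property of D along edges of Delta. -/
lemma lip [NeZero n] (a : ZMod n) : ∀ {u v : HCLVertex n}, (Delta n).Adj u v →
    D n a u ≤ D n a v + 1 := by
  intro u v h
  rw [Delta, SimpleGraph.fromRel_adj] at h
  obtain ⟨-, h⟩ := h
  rcases u with b | b | b | b <;> rcases v with e | e | e | e <;>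
    simp only [gammaRel, deltaRel, or_false, false_or, or_self] at h
  all_goals (first | (rcases h with rfl | rfl) | (subst h)) <;>
    (simp only [D] <;>
      first
        | omega
        | (rw [show b + 1 - a = (b - a) + 1 from by ring]
           have := cval_one (b - a); omega)
        | (rw [show e + 1 - a = (e - a) + 1 from by ring]
           have := cval_one (e - a); omega)
        | (rw [show b + 1 - a = (b - a) + 1 from by ring, show b + 2 - a = (b - a) + 2 from by ring]
           have := cval_one (b - a); have := cval_two (b - a); omega)
        | (rw [show e + 1 - a = (e - a) + 1 from by ring, show e + 2 - a = (e - a) + 2 from by ring]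
           have := cval_one (e - a); have := cval_two (e - a); omega)
        | (rw [show e + 1 + 1 - a = (e - a) + 2 from by ring, show e + 1 - a = (e - a) + 1 from by ring,
               show e + 2 - a = (e - a) + 2 from by ring]
           have := cval_one (e - a); have := cval_two (e - a); omega)
        | (rw [show b + 1 + 1 - a = (b - a) + 2 from by ring, show b + 1 - a = (b - a) + 1 from by ring,
               show b + 2 - a = (b - a) + 2 from by ring]
           have := cval_one (b - a); have := cval_two (b - a); omega))

lemma walk_bound [NeZero n] (a : ZMod n) {x y : HCLVertex n} (w : (Delta n).Walk x y) :
    D n a y ≤ D n a x + w.length := by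
  induction w with
  | nil => simp
  | cons h p ih =>
      have h2 := lip a h.symm
      rw [SimpleGraph.Walk.length_cons]
      omega

lemma D_p_self [NeZero n] (a : ZMod n) : D n a (.p a) = 0 := by
  simp only [D, sub_self]
  rw [cval_eq_zero]

lemma one_ne_zero' (hn2 : 2 ≤ n) : (1 : ZMod n) ≠ 0 := by
  haveI : Fact (1 < n) := ⟨by omega⟩
  intro h
  have := ZMod.val_one n
  rw [h] at this
  simp at this

/-- descent: from any vertex other than `p a`, some neighbor decreases D by one. -/
lemma descent [NeZero n] (hn2 : 2 ≤ n) (a : ZMod n) (v : HCLVertex n) (hv : v ≠ .p a) :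
    ∃ u, (Delta n).Adj u v ∧ D n a u + 1 = D n a v := by
  haveI : Fact (1 < n) := ⟨by omega⟩
  rcases v with b | b | b | b
  · -- p b, b ≠ a
    have hb : b - a ≠ 0 := by
      intro h; apply hv; congr 1; linear_combination h
    have hk : (b - a).val ≠ 0 := fun h => hb ((ZMod.val_eq_zero _).mp h)
    have hklt := ZMod.val_lt (b - a)
    by_cases hc : 2 * (b - a).val ≤ n
    · -- neighbor p (b - 1)
      refine ⟨.p (b - 1), ?_, ?_⟩
      · rw [Delta, SimpleGraph.fromRel_adj]
        constructor
        · intro h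
          have : b - 1 = b := by injection h
          have : (1 : ZMod n) = 0 := by linear_combination -this
          exact one_ne_zero' hn2 this
        · left; left; show b = b - 1 + 1; ring
      · simp only [D]
        rw [show b - 1 - a = (b - a) - 1 by ring]
        have h1 := val_sub_nat (b - a) 1 (by omega)
        rw [Nat.cast_one] at h1
        rw [cval_def, cval_def]
        omega
    · -- neighbor p (b + 1)
      refine ⟨.p (b + 1), ?_, ?_⟩
      · rw [Delta, SimpleGraph.fromRel_adj]
        constructor
        · intro h
          have : b + 1 = b := by injection h
          have : (1 : ZMod n) = 0 := by linear_combination this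
          exact one_ne_zero' hn2 this
        · right; left; rfl
      · simp only [D]
        rw [show b + 1 - a = (b - a) + 1 by ring]
        have h1 := val_add_nat (b - a) 1 (by omega)
        rw [Nat.cast_one] at h1
        rw [cval_def, cval_def]
        omega
  · -- q b : neighbor p b
    refine ⟨.p b, ?_, ?_⟩
    · rw [Delta, SimpleGraph.fromRel_adj]
      exact ⟨by simp, Or.inl (Or.inl rfl)⟩
    · simp only [D]
  · -- r b
    by_cases hc : cval n (b - a) ≤ cval n (b + 1 - a)
    · refine ⟨.q b, ?_, ?_⟩
      · rw [Delta, SimpleGraph.fromRel_adj]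
        exact ⟨by simp, Or.inl (Or.inl rfl)⟩
      · simp only [D]; omega
    · refine ⟨.q (b + 1), ?_, ?_⟩
      · rw [Delta, SimpleGraph.fromRel_adj]
        exact ⟨by simp, Or.inr (Or.inr rfl)⟩
      · simp only [D]; omega
  · -- s b
    by_cases hc : min (cval n (b - a)) (cval n (b + 1 - a)) ≤ cval n (b + 2 - a)
    · refine ⟨.r b, ?_, ?_⟩
      · rw [Delta, SimpleGraph.fromRel_adj]
        exact ⟨by simp, Or.inl (Or.inl rfl)⟩
      · simp only [D]; omega
    · refine ⟨.r (b + 1), ?_, ?_⟩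
      · rw [Delta, SimpleGraph.fromRel_adj]
        exact ⟨by simp, Or.inr (Or.inl rfl)⟩
      · simp only [D]
        rw [show b + 1 + 1 - a = (b - a) + 2 by ring,
          show b + 1 - a = (b - a) + 1 by ring, show b + 2 - a = (b - a) + 2 by ring] at *
        omega

lemma dist_eq [NeZero n] (hn2 : 2 ≤ n) (a : ZMod n) (v : HCLVertex n) :
    (Delta n).dist (.p a) v = D n a v := by
  have main : ∀ k (v : HCLVertex n), D n a v ≤ k →
      (Delta n).Reachable (.p a) v ∧ (Delta n).dist (.p a) v ≤ D n a v := by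
    intro k
    induction k with
    | zero =>
        intro v hv
        have hva : v = .p a := by
          rcases v with b | b | b | b
          · simp only [D] at hv
            have : b - a = 0 := (cval_eq_zero _).mp (by omega)
            have : b = a := by linear_combination this
            rw [this]
          · simp only [D] at hv; omega
          · simp only [D] at hv; omega
          · simp only [D] at hv; omega
        subst hva
        exact ⟨SimpleGraph.Reachable.refl _, by rw [SimpleGraph.dist_self]; omega⟩
    | succ k ih =>
        intro v hv
        by_cases hva : v = .p a
        · subst hva
          exact ⟨SimpleGraph.Reachable.refl _, by rw [SimpleGraph.dist_self]; omega⟩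
        · obtain ⟨u, hadj, hD⟩ := descent hn2 a v hva
          have hu := ih u (by omega)
          obtain ⟨w, hw⟩ := hu.1.exists_walk_length_eq_dist
          refine ⟨hu.1.trans hadj.reachable, ?_⟩
          have := SimpleGraph.dist_le (w.concat hadj)
          rw [SimpleGraph.Walk.length_concat, hw] at this
          omega
  have h1 := (main (D n a v) v le_rfl)
  obtain ⟨w, hw⟩ := h1.1.exists_walk_length_eq_dist
  have h2 := walk_bound a w
  rw [D_p_self] at h2
  omega

/-- closed forms for D in terms of val -/
lemma Dp [NeZero n] (a b : ZMod n) :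
    D n a (.p b) = min (b - a).val (n - (b - a).val) := rfl

lemma Dq [NeZero n] (a b : ZMod n) :
    D n a (.q b) = min (b - a).val (n - (b - a).val) + 1 := rfl

lemma Dr [NeZero n] (hn2 : 2 ≤ n) (a b : ZMod n) :
    D n a (.r b) = min (b - a).val (n - 1 - (b - a).val) + 2 := by
  simp only [D]
  rw [show b + 1 - a = (b - a) + 1 by ring]
  have h1 := val_add_nat (b - a) 1 (by omega)
  rw [Nat.cast_one] at h1
  have hx := ZMod.val_lt (b - a)
  rw [cval_def, cval_def]
  omega

lemma Ds [NeZero n] (hn2 : 2 ≤ n) (a b : ZMod n) :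
    D n a (.s b) = min (b - a).val (n - 2 - (b - a).val) + 3 := by
  simp only [D]
  rw [show b + 1 - a = (b - a) + 1 by ring, show b + 2 - a = (b - a) + 2 by ring]
  have h1 := val_add_nat (b - a) 1 (by omega)
  rw [Nat.cast_one] at h1
  have h2 := val_add_nat (b - a) 2 (by omega)
  rw [Nat.cast_two] at h2
  have h3 := val_add_nat ((b - a) + 1) 1 (by omega)
  rw [Nat.cast_one, show b - a + 1 + 1 = b - a + 2 by ring] at h3
  have hx := ZMod.val_lt (b - a)
  rw [cval_def, cval_def, cval_def]
  omega

end HCL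

set_option maxHeartbeats 4000000 in
theorem delta_resolving_odd (ϑ n : ℕ) (hϑ : 3 ≤ ϑ) (hn : n = 2 * ϑ + 1) :
    IsResolving (Delta n)
      {HCLVertex.p (2 : ZMod n), HCLVertex.p ((ϑ + 1 : ℕ) : ZMod n),
        HCLVertex.p ((n : ℕ) : ZMod n)} := by
  intro u v huv
  haveI : NeZero n := ⟨by omega⟩
  by_contra hcon
  push_neg at hcon
  have hn2 : 2 ≤ n := by omega
  have h1 := hcon (.p (2 : ZMod n)) (Set.mem_insert _ _)
  have h2 := hcon (.p ((ϑ + 1 : ℕ) : ZMod n)) (Set.mem_insert_of_mem _ (Set.mem_insert _ _))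
  have h3 := hcon (.p ((n : ℕ) : ZMod n))
    (Set.mem_insert_of_mem _ (Set.mem_insert_of_mem _ rfl))
  rw [HCL.dist_eq hn2, HCL.dist_eq hn2] at h1 h2 h3
  rw [show (2 : ZMod n) = ((2 : ℕ) : ZMod n) from by norm_cast] at h1
  rw [show ((n : ℕ) : ZMod n) = (0 : ZMod n) from ZMod.natCast_self n] at h3
  rcases u with b | b | b | b <;> rcases v with e | e | e | e <;>
    simp only [HCL.Dp, HCL.Dq, HCL.Dr hn2, HCL.Ds hn2, sub_zero] at h1 h2 h3
  · -- p p
    clear h2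
    obtain ⟨hb1, hb1'⟩ := HCL.val_sub_nat b (2 : ℕ) (by omega)
    obtain ⟨he1, he1'⟩ := HCL.val_sub_nat e (2 : ℕ) (by omega)
    have hbv := ZMod.val_lt b
    have hev := ZMod.val_lt e
    have hne : b.val ≠ e.val := fun hh => huv (congrArg _ (ZMod.val_injective n hh))
    omega
  · -- p q
    clear h1
    obtain ⟨hb2, hb2'⟩ := HCL.val_sub_nat b (ϑ + 1 : ℕ) (by omega)
    obtain ⟨he2, he2'⟩ := HCL.val_sub_nat e (ϑ + 1 : ℕ) (by omega)
    have hbv := ZMod.val_lt b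
    have hev := ZMod.val_lt e
    omega
  · -- p r
    clear h1
    obtain ⟨hb2, hb2'⟩ := HCL.val_sub_nat b (ϑ + 1 : ℕ) (by omega)
    obtain ⟨he2, he2'⟩ := HCL.val_sub_nat e (ϑ + 1 : ℕ) (by omega)
    have hbv := ZMod.val_lt b
    have hev := ZMod.val_lt e
    omega
  · -- p s
    clear h1
    obtain ⟨hb2, hb2'⟩ := HCL.val_sub_nat b (ϑ + 1 : ℕ) (by omega)
    obtain ⟨he2, he2'⟩ := HCL.val_sub_nat e (ϑ + 1 : ℕ) (by omega)
    have hbv := ZMod.val_lt b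
    have hev := ZMod.val_lt e
    omega
  · -- q p
    clear h1
    obtain ⟨hb2, hb2'⟩ := HCL.val_sub_nat b (ϑ + 1 : ℕ) (by omega)
    obtain ⟨he2, he2'⟩ := HCL.val_sub_nat e (ϑ + 1 : ℕ) (by omega)
    have hbv := ZMod.val_lt b
    have hev := ZMod.val_lt e
    omega
  · -- q q
    clear h2
    obtain ⟨hb1, hb1'⟩ := HCL.val_sub_nat b (2 : ℕ) (by omega)
    obtain ⟨he1, he1'⟩ := HCL.val_sub_nat e (2 : ℕ) (by omega)
    have hbv := ZMod.val_lt b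
    have hev := ZMod.val_lt e
    have hne : b.val ≠ e.val := fun hh => huv (congrArg _ (ZMod.val_injective n hh))
    omega
  · -- q r
    obtain ⟨hb1, hb1'⟩ := HCL.val_sub_nat b (2 : ℕ) (by omega)
    obtain ⟨he1, he1'⟩ := HCL.val_sub_nat e (2 : ℕ) (by omega)
    obtain ⟨hb2, hb2'⟩ := HCL.val_sub_nat b (ϑ + 1 : ℕ) (by omega)
    obtain ⟨he2, he2'⟩ := HCL.val_sub_nat e (ϑ + 1 : ℕ) (by omega)
    have hbv := ZMod.val_lt b
    have hev := ZMod.val_lt e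
    omega
  · -- q s
    clear h1
    obtain ⟨hb2, hb2'⟩ := HCL.val_sub_nat b (ϑ + 1 : ℕ) (by omega)
    obtain ⟨he2, he2'⟩ := HCL.val_sub_nat e (ϑ + 1 : ℕ) (by omega)
    have hbv := ZMod.val_lt b
    have hev := ZMod.val_lt e
    omega
  · -- r p
    clear h1
    obtain ⟨hb2, hb2'⟩ := HCL.val_sub_nat b (ϑ + 1 : ℕ) (by omega)
    obtain ⟨he2, he2'⟩ := HCL.val_sub_nat e (ϑ + 1 : ℕ) (by omega)
    have hbv := ZMod.val_lt b
    have hev := ZMod.val_lt e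
    omega
  · -- r q
    obtain ⟨hb1, hb1'⟩ := HCL.val_sub_nat b (2 : ℕ) (by omega)
    obtain ⟨he1, he1'⟩ := HCL.val_sub_nat e (2 : ℕ) (by omega)
    obtain ⟨hb2, hb2'⟩ := HCL.val_sub_nat b (ϑ + 1 : ℕ) (by omega)
    obtain ⟨he2, he2'⟩ := HCL.val_sub_nat e (ϑ + 1 : ℕ) (by omega)
    have hbv := ZMod.val_lt b
    have hev := ZMod.val_lt e
    omega
  · -- r r
    clear h2
    obtain ⟨hb1, hb1'⟩ := HCL.val_sub_nat b (2 : ℕ) (by omega)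
    obtain ⟨he1, he1'⟩ := HCL.val_sub_nat e (2 : ℕ) (by omega)
    have hbv := ZMod.val_lt b
    have hev := ZMod.val_lt e
    have hne : b.val ≠ e.val := fun hh => huv (congrArg _ (ZMod.val_injective n hh))
    omega
  · -- r s
    obtain ⟨hb1, hb1'⟩ := HCL.val_sub_nat b (2 : ℕ) (by omega)
    obtain ⟨he1, he1'⟩ := HCL.val_sub_nat e (2 : ℕ) (by omega)
    obtain ⟨hb2, hb2'⟩ := HCL.val_sub_nat b (ϑ + 1 : ℕ) (by omega)
    obtain ⟨he2, he2'⟩ := HCL.val_sub_nat e (ϑ + 1 : ℕ) (by omega)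
    have hbv := ZMod.val_lt b
    have hev := ZMod.val_lt e
    omega
  · -- s p
    clear h1
    obtain ⟨hb2, hb2'⟩ := HCL.val_sub_nat b (ϑ + 1 : ℕ) (by omega)
    obtain ⟨he2, he2'⟩ := HCL.val_sub_nat e (ϑ + 1 : ℕ) (by omega)
    have hbv := ZMod.val_lt b
    have hev := ZMod.val_lt e
    omega
  · -- s q
    clear h1
    obtain ⟨hb2, hb2'⟩ := HCL.val_sub_nat b (ϑ + 1 : ℕ) (by omega)
    obtain ⟨he2, he2'⟩ := HCL.val_sub_nat e (ϑ + 1 : ℕ) (by omega)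
    have hbv := ZMod.val_lt b
    have hev := ZMod.val_lt e
    omega
  · -- s r
    obtain ⟨hb1, hb1'⟩ := HCL.val_sub_nat b (2 : ℕ) (by omega)
    obtain ⟨he1, he1'⟩ := HCL.val_sub_nat e (2 : ℕ) (by omega)
    obtain ⟨hb2, hb2'⟩ := HCL.val_sub_nat b (ϑ + 1 : ℕ) (by omega)
    obtain ⟨he2, he2'⟩ := HCL.val_sub_nat e (ϑ + 1 : ℕ) (by omega)
    have hbv := ZMod.val_lt b
    have hev := ZMod.val_lt e
    omega
  · -- s s
    clear h2
    obtain ⟨hb1, hb1'⟩ := HCL.val_sub_nat b (2 : ℕ) (by omega)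
    obtain ⟨he1, he1'⟩ := HCL.val_sub_nat e (2 : ℕ) (by omega)
    have hbv := ZMod.val_lt b
    have hev := ZMod.val_lt e
    have hne : b.val ≠ e.val := fun hh => huv (congrArg _ (ZMod.val_injective n hh))
    omega
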